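/- arXiv:1012.4889 — 4 statements merged into one kernel-verified Lean document; each statement's English description precedes it below -/
import Mathlib

section
/- Let x ∈ ℝⁿ, m ≥ 1, and suppose x* ∈ ℝⁿ satisfies |x_i − x*_i| ≤ err₂^m(x)/m^{1/2} for all i. Let x̂ be the m-sparse vector that agrees with x* on the m coordinates of largest |x*_i| and is zero elsewhere. Then err₂^m(x) ≤ ‖x − x̂‖₂ ≤ 10·err₂^m(x). -/
open Finset

/-- `err₂^m(x)`: the minimum of `‖x − y‖₂` over all `m`-sparse vectors `y`. -/
noncomputable def err2 (n m : ℕ) (x : Fin n → ℝ) : ℝ :=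
  sInf {e : ℝ | ∃ y : Fin n → ℝ,
    (Finset.univ.filter (fun i => y i ≠ 0)).card ≤ m ∧
      e = Real.sqrt (∑ i, (x i - y i) ^ 2)}

/-- If `x*` approximates `x` with per-coordinate error
`err₂^m(x)/√m`, and `x̂` agrees with `x*` on `m` coordinates of largest `|x*_i|`
and is zero elsewhere, then `err₂^m(x) ≤ ‖x − x̂‖₂ ≤ 10·err₂^m(x)`. -/
theorem count_sketch_sparse_approx (n m : ℕ) (hm : 1 ≤ m) (hmn : m ≤ n)
    (x xs : Fin n → ℝ)
    (hxs : ∀ i, |x i - xs i| ≤ err2 n m x / Real.sqrt m)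
    (H : Finset (Fin n)) (hHcard : H.card = m)
    (hHtop : ∀ i ∈ H, ∀ j ∉ H, |xs j| ≤ |xs i|)
    (xhat : Fin n → ℝ) (hxhat : ∀ i, xhat i = if i ∈ H then xs i else 0) :
    err2 n m x ≤ Real.sqrt (∑ i, (x i - xhat i) ^ 2) ∧
      Real.sqrt (∑ i, (x i - xhat i) ^ 2) ≤ 10 * err2 n m x := by
  classical
  set S : Set ℝ := {e : ℝ | ∃ y : Fin n → ℝ,
    (Finset.univ.filter (fun i => y i ≠ 0)).card ≤ m ∧
      e = Real.sqrt (∑ i, (x i - y i) ^ 2)} with hS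
  have hES : err2 n m x = sInf S := rfl
  set E := err2 n m x with hE
  have hmpos : (0:ℝ) < m := by exact_mod_cast hm
  have hsm : (0:ℝ) < Real.sqrt m := Real.sqrt_pos.mpr hmpos
  have hne : S.Nonempty := ⟨Real.sqrt (∑ i, (x i - (0 : Fin n → ℝ) i) ^ 2), 0, by simp, rfl⟩
  have hbdd : BddBelow S := ⟨0, by rintro e ⟨y, -, rfl⟩; exact Real.sqrt_nonneg _⟩
  have hE0 : 0 ≤ E := by
    show (0:ℝ) ≤ sInf S
    exact le_csInf hne (by rintro e ⟨y, -, rfl⟩; exact Real.sqrt_nonneg _)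
  -- membership of ‖x - x̂‖
  have hsupp : (Finset.univ.filter (fun i => xhat i ≠ 0)).card ≤ m := by
    have hsub : Finset.univ.filter (fun i => xhat i ≠ 0) ⊆ H := by
      intro i hi
      rw [Finset.mem_filter] at hi
      by_contra hiH
      exact hi.2 (by rw [hxhat i, if_neg hiH])
    calc (Finset.univ.filter (fun i => xhat i ≠ 0)).card ≤ H.card :=
          Finset.card_le_card hsub
      _ = m := hHcard
  have hmem : Real.sqrt (∑ i, (x i - xhat i) ^ 2) ∈ S := ⟨xhat, hsupp, rfl⟩
  have hfirst : E ≤ Real.sqrt (∑ i, (x i - xhat i) ^ 2) := by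
    show sInf S ≤ _
    exact csInf_le hbdd hmem
  refine ⟨hfirst, ?_⟩
  -- optimal top-m set T for x
  obtain ⟨T, hTmem, hTmax⟩ := Finset.exists_max_image ((Finset.univ : Finset (Fin n)).powersetCard m)
    (fun s => ∑ i ∈ s, x i ^ 2)
    (Finset.powersetCard_nonempty.mpr (by simpa using hmn))
  have hTcard : T.card = m := (Finset.mem_powersetCard.mp hTmem).2
  set K : ℝ := ∑ i ∈ Tᶜ, x i ^ 2 with hK
  have hK0 : 0 ≤ K := Finset.sum_nonneg fun i _ => sq_nonneg _
  -- every m-sparse y has error at least √K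
  have hTle : ∀ e ∈ S, Real.sqrt K ≤ e := by
    rintro e ⟨y, hy, rfl⟩
    apply Real.sqrt_le_sqrt
    obtain ⟨T', hsub, hT'card⟩ := Finset.exists_superset_card_eq hy (by simpa using hmn)
    have h1 : ∑ i ∈ T'ᶜ, x i ^ 2 ≤ ∑ i, (x i - y i) ^ 2 := by
      have : ∑ i ∈ T'ᶜ, x i ^ 2 = ∑ i ∈ T'ᶜ, (x i - y i) ^ 2 := by
        apply Finset.sum_congr rfl
        intro i hi
        have hiT' : i ∉ T' := Finset.mem_compl.mp hi
        have : y i = 0 := by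
          by_contra hyi
          exact hiT' (hsub (Finset.mem_filter.mpr ⟨Finset.mem_univ _, hyi⟩))
        rw [this, sub_zero]
      rw [this]
      exact Finset.sum_le_sum_of_subset_of_nonneg (Finset.subset_univ _)
        (fun i _ _ => sq_nonneg _)
    have h2 : K ≤ ∑ i ∈ T'ᶜ, x i ^ 2 := by
      have hmax := hTmax T' (Finset.mem_powersetCard.mpr ⟨Finset.subset_univ _, hT'card⟩)
      have hc1 := Finset.sum_add_sum_compl T (fun i => x i ^ 2)
      have hc2 := Finset.sum_add_sum_compl T' (fun i => x i ^ 2)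
      linarith
    linarith
  have hKE : K ≤ E ^ 2 := by
    have h1 : Real.sqrt K ≤ E := by
      show _ ≤ sInf S
      exact le_csInf hne hTle
    calc K = Real.sqrt K ^ 2 := (Real.sq_sqrt hK0).symm
      _ ≤ E ^ 2 := by nlinarith [Real.sqrt_nonneg K]
  -- decompose the error of x̂
  have hsplit : ∑ i, (x i - xhat i) ^ 2
      = ∑ i ∈ H, (x i - xs i) ^ 2 + ∑ i ∈ Hᶜ, x i ^ 2 := by
    rw [← Finset.sum_add_sum_compl H (fun i => (x i - xhat i) ^ 2)]
    congr 1
    · exact Finset.sum_congr rfl fun i hi => by rw [hxhat i, if_pos hi]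
    · exact Finset.sum_congr rfl fun i hi => by
        rw [hxhat i, if_neg (Finset.mem_compl.mp hi), sub_zero]
  -- term 1
  have hterm1 : ∑ i ∈ H, (x i - xs i) ^ 2 ≤ E ^ 2 := by
    have h1 : ∀ i ∈ H, (x i - xs i) ^ 2 ≤ E ^ 2 / m := by
      intro i _
      have := hxs i
      have h2 : (x i - xs i) ^ 2 ≤ (E / Real.sqrt m) ^ 2 := by
        rw [← sq_abs]
        exact pow_le_pow_left₀ (abs_nonneg _) this 2
      have h3 : (E / Real.sqrt m) ^ 2 = E ^ 2 / m := by
        rw [div_pow, Real.sq_sqrt hmpos.le]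
      linarith
    calc ∑ i ∈ H, (x i - xs i) ^ 2 ≤ ∑ _i ∈ H, E ^ 2 / m := Finset.sum_le_sum h1
      _ = m * (E ^ 2 / m) := by rw [Finset.sum_const, hHcard, nsmul_eq_mul]
      _ = E ^ 2 := by field_simp
  -- term 2 split by T
  have hsplit2 : ∑ i ∈ Hᶜ, x i ^ 2
      = ∑ i ∈ T \ H, x i ^ 2 + ∑ i ∈ Hᶜ.filter (fun i => i ∉ T), x i ^ 2 := by
    rw [← Finset.sum_filter_add_sum_filter_not Hᶜ (fun i => i ∈ T) (fun i => x i ^ 2)]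
    congr 1
    apply Finset.sum_congr _ fun i _ => rfl
    ext i
    simp [Finset.mem_filter, Finset.mem_compl, Finset.mem_sdiff, and_comm]
  have hrest : ∑ i ∈ Hᶜ.filter (fun i => i ∉ T), x i ^ 2 ≤ E ^ 2 := by
    refine le_trans ?_ hKE
    rw [hK]
    apply Finset.sum_le_sum_of_subset_of_nonneg _ (fun i _ _ => sq_nonneg _)
    intro i hi
    rw [Finset.mem_filter] at hi
    exact Finset.mem_compl.mpr hi.2
  -- pairing argument on T \ H vs H \ T
  have hcards : (T \ H).card = (H \ T).card := by
    have h1 := Finset.card_sdiff_add_card_inter T H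
    have h2 := Finset.card_sdiff_add_card_inter H T
    rw [Finset.inter_comm] at h2
    omega
  have hpair : ∑ i ∈ T \ H, x i ^ 2 ≤ 10 * E ^ 2 := by
    set e := Finset.equivOfCardEq hcards with he
    have hpt : ∀ a : {x // x ∈ T \ H}, x a.1 ^ 2 ≤ 2 * x (e a).1 ^ 2 + 8 * (E ^ 2 / m) := by
      intro a
      have hiT : a.1 ∉ H := (Finset.mem_sdiff.mp a.2).2
      have hjH : (e a).1 ∈ H := (Finset.mem_sdiff.mp (e a).2).1
      have h1 : |xs a.1| ≤ |xs (e a).1| := hHtop (e a).1 hjH a.1 hiT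
      have h2 : |x a.1 - xs a.1| ≤ E / Real.sqrt m := hxs a.1
      have h3 : |x (e a).1 - xs (e a).1| ≤ E / Real.sqrt m := hxs (e a).1
      have h4 : |x a.1| ≤ |x (e a).1| + 2 * (E / Real.sqrt m) := by
        have t1 : |x a.1| ≤ |x a.1 - xs a.1| + |xs a.1| := by
          calc |x a.1| = |(x a.1 - xs a.1) + xs a.1| := by ring_nf
            _ ≤ |x a.1 - xs a.1| + |xs a.1| := abs_add_le _ _
        have t2 : |xs (e a).1| ≤ |xs (e a).1 - x (e a).1| + |x (e a).1| := by
          calc |xs (e a).1| = |(xs (e a).1 - x (e a).1) + x (e a).1| := by ring_nf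
            _ ≤ |xs (e a).1 - x (e a).1| + |x (e a).1| := abs_add_le _ _
        rw [abs_sub_comm] at t2
        linarith
      have hEm : (E / Real.sqrt m) ^ 2 = E ^ 2 / m := by
        rw [div_pow, Real.sq_sqrt hmpos.le]
      have hemn : 0 ≤ E / Real.sqrt m := div_nonneg hE0 hsm.le
      have h5 : x a.1 ^ 2 ≤ (|x (e a).1| + 2 * (E / Real.sqrt m)) ^ 2 := by
        rw [← sq_abs]
        exact pow_le_pow_left₀ (abs_nonneg _) h4 2
      have h6 : x a.1 ^ 2 ≤ 2 * x (e a).1 ^ 2 + 8 * (E / Real.sqrt m) ^ 2 := by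
        nlinarith [sq_nonneg (|x (e a).1| - 2 * (E / Real.sqrt m)), sq_abs (x (e a).1)]
      rw [hEm] at h6
      exact h6
    have hsum : ∑ i ∈ T \ H, x i ^ 2 ≤ ∑ j ∈ H \ T, (2 * x j ^ 2 + 8 * (E ^ 2 / m)) := by
      calc ∑ i ∈ T \ H, x i ^ 2
          = ∑ a : {x // x ∈ T \ H}, x a.1 ^ 2 :=
            (Finset.sum_coe_sort (T \ H) (fun i => x i ^ 2)).symm
        _ ≤ ∑ a : {x // x ∈ T \ H}, (2 * x (e a).1 ^ 2 + 8 * (E ^ 2 / m)) :=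
            Finset.sum_le_sum fun a _ => hpt a
        _ = ∑ b : {x // x ∈ H \ T}, (2 * x b.1 ^ 2 + 8 * (E ^ 2 / m)) :=
            Equiv.sum_comp e (fun b : {x // x ∈ H \ T} => 2 * x b.1 ^ 2 + 8 * (E ^ 2 / m))
        _ = ∑ j ∈ H \ T, (2 * x j ^ 2 + 8 * (E ^ 2 / m)) :=
            Finset.sum_coe_sort (H \ T) (fun j => 2 * x j ^ 2 + 8 * (E ^ 2 / (m:ℝ)))
    have hBsub : ∑ j ∈ H \ T, x j ^ 2 ≤ E ^ 2 := by
      refine le_trans ?_ hKE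
      rw [hK]
      apply Finset.sum_le_sum_of_subset_of_nonneg _ (fun i _ _ => sq_nonneg _)
      intro i hi
      exact Finset.mem_compl.mpr (Finset.mem_sdiff.mp hi).2
    have hBcard : (H \ T).card ≤ m := le_trans (Finset.card_le_card (Finset.sdiff_subset)) hHcard.le
    have : ∑ j ∈ H \ T, (2 * x j ^ 2 + 8 * (E ^ 2 / m))
        = 2 * ∑ j ∈ H \ T, x j ^ 2 + (H \ T).card * (8 * (E ^ 2 / m)) := by
      rw [Finset.sum_add_distrib, Finset.mul_sum, Finset.sum_const, nsmul_eq_mul]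
    have hcardmul : ((H \ T).card : ℝ) * (8 * (E ^ 2 / m)) ≤ 8 * E ^ 2 := by
      have h8 : (0:ℝ) ≤ 8 * (E ^ 2 / m) := by positivity
      have hc : ((H \ T).card : ℝ) ≤ m := by exact_mod_cast hBcard
      calc ((H \ T).card : ℝ) * (8 * (E ^ 2 / m)) ≤ m * (8 * (E ^ 2 / m)) :=
            mul_le_mul_of_nonneg_right hc h8
        _ = 8 * E ^ 2 := by field_simp
    linarith
  -- combine
  have htotal : ∑ i, (x i - xhat i) ^ 2 ≤ 12 * E ^ 2 := by
    rw [hsplit, hsplit2]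
    linarith
  have hle : ∑ i, (x i - xhat i) ^ 2 ≤ (10 * E) ^ 2 := by nlinarith [sq_nonneg E]
  calc Real.sqrt (∑ i, (x i - xhat i) ^ 2) ≤ Real.sqrt ((10 * E) ^ 2) :=
        Real.sqrt_le_sqrt hle
    _ = 10 * E := Real.sqrt_sq (by linarith)
end

section
/- Let S, T ⊆ [2n] with |S| = |T| = n, and suppose there exist i ∈ S ∩ T and j ∈ [2n] with j ∉ S ∩ T. If P is a uniformly random subset of [2n] of size n, then P[|S ∩ P| + |T ∩ P| ≥ n + 1] > 1/8. -/
open Finset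

/-- Let `S, T ⊆ [2n]` with `|S| = |T| = n`, `i ∈ S ∩ T`, and
`j ∉ S ∩ T`. If `P` is a uniform random `n`-subset of `[2n]`, then
`P[|S ∩ P| + |T ∩ P| ≥ n + 1] > 1/8`. -/
theorem random_subset_intersection (n : ℕ) (S T : Finset (Fin (2 * n)))
    (hS : S.card = n) (hT : T.card = n)
    (i j : Fin (2 * n)) (hi : i ∈ S ∩ T) (hj : j ∉ S ∩ T) :
    (1 : ℝ) / 8 <
      ((((Finset.univ : Finset (Fin (2 * n))).powersetCard n).filter
          (fun P => n + 1 ≤ (S ∩ P).card + (T ∩ P).card)).card : ℝ) /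
        (((Finset.univ : Finset (Fin (2 * n))).powersetCard n).card : ℝ) := by
  obtain ⟨hiS, hiT⟩ := mem_inter.mp hi
  have hn : 0 < n := hS ▸ card_pos.mpr ⟨i, hiS⟩
  obtain ⟨m, rfl⟩ : ∃ m, n = m + 1 := ⟨n - 1, by omega⟩
  have hij : i ≠ j := fun h => hj (h ▸ hi)
  set U : Finset (Fin (2 * (m + 1))) := univ \ {i, j} with hU
  have hiU : i ∉ U := by simp [hU]
  have hjU : j ∉ U := by simp [hU]
  have hUcard : U.card = 2 * m := by
    rw [hU, card_sdiff_of_subset (subset_univ _), card_univ, Fintype.card_fin,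
      card_insert_of_notMem (by simp [hij]), card_singleton]
    omega
  -- the key counting lemma for a single set X ∈ {S, T}
  have key : ∀ X : Finset (Fin (2 * (m + 1))), i ∈ X → X.card = m + 1 →
      ∀ Q ⊆ U, (X ∩ insert i Q).card + (X ∩ insert i (U \ Q)).card +
        (if j ∈ X then 1 else 0) = m + 2 := by
    intro X hiX hX Q hQU
    have hiQ : i ∉ Q := fun h => hiU (hQU h)
    have hiQ' : i ∉ U \ Q := fun h => hiU (mem_sdiff.mp h).1
    rw [inter_insert_of_mem hiX, inter_insert_of_mem hiX,
      card_insert_of_notMem (fun h => hiQ (mem_inter.mp h).2),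
      card_insert_of_notMem (fun h => hiQ' (mem_inter.mp h).2)]
    have hsplit : (X ∩ Q).card + (X ∩ (U \ Q)).card = (X ∩ U).card := by
      rw [← card_union_of_disjoint, ← inter_union_distrib_left, union_sdiff_of_subset hQU]
      exact Disjoint.mono inf_le_right inf_le_right (disjoint_sdiff)
    have hXU : X ∩ U = X \ {i, j} := by
      rw [hU]; ext x; simp [mem_sdiff, and_comm]
    have hXij : (X ∩ ({i, j} : Finset _)).card = 1 + (if j ∈ X then 1 else 0) := by
      by_cases hjX : j ∈ X
      · have : X ∩ ({i, j} : Finset _) = {i, j} := by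
          ext x
          simp only [mem_inter, mem_insert, mem_singleton]
          constructor
          · tauto
          · rintro (rfl | rfl) <;> simp [hiX, hjX]
        rw [this, card_insert_of_notMem (by simp [hij]), card_singleton, if_pos hjX]
      · have : X ∩ ({i, j} : Finset _) = {i} := by
          ext x
          simp only [mem_inter, mem_insert, mem_singleton]
          constructor
          · rintro ⟨hx, rfl | rfl⟩ <;> tauto
          · rintro rfl; simp [hiX]
        rw [this, card_singleton, if_neg hjX]
      -- done
    have hsd : (X \ ({i, j} : Finset _)).card + (X ∩ ({i, j} : Finset _)).card = m + 1 := by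
      rw [card_sdiff_add_card_inter, hX]
    rw [hXU] at hsplit
    by_cases hjX : j ∈ X
    · rw [if_pos hjX] at hXij ⊢; omega
    · rw [if_neg hjX] at hXij ⊢; omega
  have hjST : ¬(j ∈ S ∧ j ∈ T) := fun ⟨h1, h2⟩ => hj (mem_inter.mpr ⟨h1, h2⟩)
  -- the map from (m)-subsets of U to good n-subsets
  set f : Finset (Fin (2 * (m + 1))) → ℕ := fun P => (S ∩ P).card + (T ∩ P).card with hf
  set g : Finset (Fin (2 * (m + 1))) → Finset (Fin (2 * (m + 1))) := fun Q =>
    if m + 2 ≤ f (insert i Q) then insert i Q else insert i (U \ Q) with hg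
  set s := U.powersetCard m with hs
  set good := ((univ : Finset (Fin (2 * (m + 1)))).powersetCard (m + 1)).filter
    (fun P => m + 1 + 1 ≤ (S ∩ P).card + (T ∩ P).card) with hgood
  have hmapsto : ∀ Q ∈ s, g Q ∈ good := by
    intro Q hQ
    obtain ⟨hQU, hQcard⟩ := mem_powersetCard.mp hQ
    have hiQ : i ∉ Q := fun h => hiU (hQU h)
    have hiQ' : i ∉ U \ Q := fun h => hiU (mem_sdiff.mp h).1
    have h1 := key S hiS hS Q hQU
    have h2 := key T hiT hT Q hQU
    have hsum : f (insert i Q) + f (insert i (U \ Q)) ≥ 2 * m + 3 := by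
      show (S ∩ insert i Q).card + (T ∩ insert i Q).card +
          ((S ∩ insert i (U \ Q)).card + (T ∩ insert i (U \ Q)).card) ≥ 2 * m + 3
      by_cases hjS : j ∈ S
      · rw [if_pos hjS] at h1
        have hjT : j ∉ T := fun h => hjST ⟨hjS, h⟩
        rw [if_neg hjT] at h2
        omega
      · rw [if_neg hjS] at h1
        by_cases hjT : j ∈ T
        · rw [if_pos hjT] at h2; omega
        · rw [if_neg hjT] at h2; omega
    have hcard1 : (insert i Q).card = m + 1 := by
      rw [card_insert_of_notMem hiQ, hQcard]
    have hcard2 : (insert i (U \ Q)).card = m + 1 := by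
      rw [card_insert_of_notMem hiQ', card_sdiff_of_subset hQU, hUcard, hQcard]; omega
    have hgQ : g Q = if m + 2 ≤ f (insert i Q) then insert i Q else insert i (U \ Q) := rfl
    rw [hgQ]
    by_cases hcase : m + 2 ≤ f (insert i Q)
    · rw [if_pos hcase, hgood, mem_filter, mem_powersetCard]
      exact ⟨⟨subset_univ _, hcard1⟩, hcase⟩
    · rw [if_neg hcase, hgood, mem_filter, mem_powersetCard]
      refine ⟨⟨subset_univ _, hcard2⟩, ?_⟩
      show m + 1 + 1 ≤ f _
      omega
  have hfiber : ∀ b ∈ s.image g, (s.filter fun Q => g Q = b).card ≤ 2 := by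
    intro b _
    have hsub : (s.filter fun Q => g Q = b) ⊆ {b.erase i, U \ b.erase i} := by
      intro Q hQ
      obtain ⟨hQs, hQb⟩ := mem_filter.mp hQ
      obtain ⟨hQU, _⟩ := mem_powersetCard.mp hQs
      have hiQ : i ∉ Q := fun h => hiU (hQU h)
      have hiQ' : i ∉ U \ Q := fun h => hiU (mem_sdiff.mp h).1
      replace hQb : (if m + 2 ≤ f (insert i Q) then insert i Q else insert i (U \ Q)) = b := hQb
      simp only [mem_insert, mem_singleton]
      by_cases hcase : m + 2 ≤ f (insert i Q)
      · rw [if_pos hcase] at hQb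
        left; rw [← hQb, erase_insert hiQ]
      · rw [if_neg hcase] at hQb
        right; rw [← hQb, erase_insert hiQ', Finset.sdiff_sdiff_eq_self hQU]
    calc (s.filter fun Q => g Q = b).card ≤ _ := card_le_card hsub
      _ ≤ 2 := (card_insert_le _ _).trans (by simp)
  have hcount : s.card ≤ 2 * good.card := by
    calc s.card ≤ 2 * (s.image g).card := card_le_mul_card_image s 2 hfiber
      _ ≤ 2 * good.card := by
          apply Nat.mul_le_mul_left
          exact card_le_card (fun b hb => by
            obtain ⟨Q, hQ, rfl⟩ := mem_image.mp hb
            exact hmapsto Q hQ)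
  -- the cardinalities
  have hscard : s.card = Nat.choose (2 * m) m := by
    rw [hs, card_powersetCard, hUcard]
  have htotal : ((univ : Finset (Fin (2 * (m + 1)))).powersetCard (m + 1)).card
      = Nat.choose (2 * (m + 1)) (m + 1) := by
    rw [card_powersetCard, card_univ, Fintype.card_fin]
  -- binomial identity: (m+1)^2 * C(2m+2, m+1) = (2m+2)(2m+1) * C(2m, m)
  have e1 := Nat.add_one_mul_choose_eq (2 * m + 1) m
  have e2 := Nat.add_one_mul_choose_eq (2 * m) m
  have esymm : Nat.choose (2 * m + 1) (m + 1) = Nat.choose (2 * m + 1) m := by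
    rw [← Nat.choose_symm (by omega)]
    congr 1
    omega
  have hident : (m + 1) ^ 2 * Nat.choose (2 * (m + 1)) (m + 1)
      = (2 * m + 2) * (2 * m + 1) * Nat.choose (2 * m) m := by
    have h2m : 2 * (m + 1) = (2 * m + 1) + 1 := by omega
    rw [h2m]
    rw [esymm] at e2
    nlinarith [e1, e2]
  have hchoosepos : 0 < Nat.choose (2 * m) m := Nat.choose_pos (by omega)
  have hgoodpos : 0 < good.card := by
    rcases Nat.eq_zero_or_pos good.card with h | h
    · omega
    · exact h
  -- main inequality in ℕ : total < 8 * good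
  have hmain : ((univ : Finset (Fin (2 * (m + 1)))).powersetCard (m + 1)).card
      < 8 * good.card := by
    rw [htotal]
    have h1 : (m + 1) ^ 2 * Nat.choose (2 * (m + 1)) (m + 1)
        < (m + 1) ^ 2 * (8 * good.card) := by
      rw [hident]
      have : Nat.choose (2 * m) m ≤ 2 * good.card := hscard ▸ hcount
      nlinarith
    exact Nat.lt_of_mul_lt_mul_left h1
  have htpos : (0 : ℝ) < ((univ : Finset (Fin (2 * (m + 1)))).powersetCard (m + 1)).card := by
    rw [htotal]
    exact_mod_cast Nat.choose_pos (by omega)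
  rw [div_lt_div_iff₀ (by norm_num) htpos]
  calc (1 : ℝ) * ((univ : Finset (Fin (2 * (m + 1)))).powersetCard (m + 1)).card
      = ((univ : Finset (Fin (2 * (m + 1)))).powersetCard (m + 1)).card := one_mul _
    _ < (8 * good.card : ℕ) := by exact_mod_cast hmain
    _ = (good.card : ℝ) * 8 := by push_cast; ring
end

section
/- Let S, T ⊆ [2n] with |S| = |T| = n, let i ∈ S ∩ T, j ∉ S ∩ T with i ≠ j, and let Q ⊆ [2n] \ {i, j} with |Q| = n − 1. Then at least one of the four sets Q∪{i}, Q∪{j}, ([2n] \ Q) \ {j}, ([2n] \ Q) \ {i} — each of size n — satisfies |S ∩ P| + |T ∩ P| ≥ n + 1. -/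
open Finset

/-- With `S, T ⊆ [2n]`, `|S| = |T| = n`, `i ∈ S ∩ T`, `j ∉ S ∩ T`,
`i ≠ j`, and `Q ⊆ [2n] \ {i,j}` with `|Q| = n − 1`, at least one of the four
size-`n` sets `Q∪{i}`, `Q∪{j}`, `Qᶜ \ {j}`, `Qᶜ \ {i}` satisfies
`|S ∩ P| + |T ∩ P| ≥ n + 1`. -/
theorem four_sets_one_good (n : ℕ) (hn : 1 ≤ n) (S T : Finset (Fin (2 * n)))
    (hS : S.card = n) (hT : T.card = n)
    (i j : Fin (2 * n)) (hi : i ∈ S ∩ T) (hj : j ∉ S ∩ T) (hij : i ≠ j)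
    (Q : Finset (Fin (2 * n))) (hQ : Q ⊆ Finset.univ \ {i, j}) (hQcard : Q.card = n - 1) :
    ((insert i Q).card = n ∧ (insert j Q).card = n ∧
      ((Finset.univ \ Q) \ {j}).card = n ∧ ((Finset.univ \ Q) \ {i}).card = n) ∧
    (n + 1 ≤ (S ∩ insert i Q).card + (T ∩ insert i Q).card ∨
     n + 1 ≤ (S ∩ insert j Q).card + (T ∩ insert j Q).card ∨
     n + 1 ≤ (S ∩ ((Finset.univ \ Q) \ {j})).card + (T ∩ ((Finset.univ \ Q) \ {j})).card ∨
     n + 1 ≤ (S ∩ ((Finset.univ \ Q) \ {i})).card + (T ∩ ((Finset.univ \ Q) \ {i})).card) := by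
  have hiS : i ∈ S := (mem_inter.1 hi).1
  have hiT : i ∈ T := (mem_inter.1 hi).2
  have hjST : j ∉ S ∨ j ∉ T := by
    by_contra h; push_neg at h; exact hj (mem_inter.2 ⟨h.1, h.2⟩)
  have hiQ : i ∉ Q := by
    intro h; have := hQ h; simp at this
  have hjQ : j ∉ Q := by
    intro h; have := hQ h; simp at this
  have hcard : Fintype.card (Fin (2 * n)) = 2 * n := by simp
  -- sizes
  have c1 : (insert i Q).card = n := by
    rw [card_insert_of_notMem hiQ, hQcard]; omega
  have c2 : (insert j Q).card = n := by
    rw [card_insert_of_notMem hjQ, hQcard]; omega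
  have hcompl : ∀ a : Fin (2 * n), a ∉ Q →
      (Finset.univ \ Q) \ ({a} : Finset (Fin (2 * n))) = Finset.univ \ insert a Q := by
    intro a ha; ext x; simp; tauto
  have c3 : ((Finset.univ \ Q) \ {j}).card = n := by
    rw [hcompl j hjQ, card_sdiff_of_subset (subset_univ _), card_univ, hcard, c2]; omega
  have c4 : ((Finset.univ \ Q) \ {i}).card = n := by
    rw [hcompl i hiQ, card_sdiff_of_subset (subset_univ _), card_univ, hcard, c1]; omega
  refine ⟨⟨c1, c2, c3, c4⟩, ?_⟩
  -- key counts
  have e1 : (S ∩ insert i Q).card = (S ∩ Q).card + 1 := by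
    rw [Finset.inter_insert_of_mem hiS,
      card_insert_of_notMem (fun h => hiQ (mem_inter.1 h).2)]
  have e1' : (T ∩ insert i Q).card = (T ∩ Q).card + 1 := by
    rw [Finset.inter_insert_of_mem hiT,
      card_insert_of_notMem (fun h => hiQ (mem_inter.1 h).2)]
  have e2 : (S ∩ insert j Q).card ≤ (S ∩ Q).card + 1 := by
    calc (S ∩ insert j Q).card ≤ (insert j (S ∩ Q)).card :=
          card_le_card (by intro x hx; simp at hx ⊢; tauto)
      _ ≤ (S ∩ Q).card + 1 := card_insert_le _ _
  have e2' : (T ∩ insert j Q).card ≤ (T ∩ Q).card + 1 := by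
    calc (T ∩ insert j Q).card ≤ (insert j (T ∩ Q)).card :=
          card_le_card (by intro x hx; simp at hx ⊢; tauto)
      _ ≤ (T ∩ Q).card + 1 := card_insert_le _ _
  have e3 : (S ∩ insert j Q).card = (S ∩ Q).card ∨
      (T ∩ insert j Q).card = (T ∩ Q).card := by
    rcases hjST with h | h
    · left; rw [Finset.inter_insert_of_notMem h]
    · right; rw [Finset.inter_insert_of_notMem h]
  -- complement counts
  have hcs : ∀ U : Finset (Fin (2 * n)), ∀ a : Fin (2 * n), a ∉ Q →
      (U ∩ ((Finset.univ \ Q) \ {a})).card = U.card - (U ∩ insert a Q).card := by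
    intro U a ha
    rw [hcompl a ha]
    have : U ∩ (Finset.univ \ insert a Q) = U \ insert a Q := by
      ext x; simp
    rw [this]
    have h := Finset.card_inter_add_card_sdiff U (insert a Q)
    omega
  -- case split
  by_cases hbig : n + 1 ≤ (S ∩ insert i Q).card + (T ∩ insert i Q).card
  · exact Or.inl hbig
  · -- then f(Q) + 2 ≤ n, so f(P2) ≤ n - 1, so f(P3) ≥ n + 1
    right; right; left
    rw [hcs S j hjQ, hcs T j hjQ, hS, hT]
    have hle1 : (S ∩ insert j Q).card ≤ n := by
      exact le_trans (card_le_card inter_subset_left) (le_of_eq hS)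
    have hle2 : (T ∩ insert j Q).card ≤ n := by
      exact le_trans (card_le_card inter_subset_left) (le_of_eq hT)
    rcases e3 with h | h <;> omega
end

section
/- Let p > 0, φ ∈ (0, 1/2^{1/p}) (so that (2φ)^p < 1), and set b = (1 − (2φ)^p)^{−1/p}. Then for all integers 1 ≤ i ≤ s: φ^p · ∑_{j=i}^{s} ⌈b^{s−j}⌉^p < b^{p(s−i)}. -/
open Finset

/-- For `p > 0`, `φ ∈ (0, 1/2^{1/p})` with `(2φ)^p < 1` and
`b = (1 − (2φ)^p)^{−1/p}`, for all `1 ≤ i ≤ s`: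
`φ^p · ∑_{j=i}^{s} ⌈b^{s−j}⌉^p < b^{p(s−i)}`. -/
theorem heavy_hitter_geometric (p φ b : ℝ) (hp : 0 < p)
    (hφ0 : 0 < φ) (hφ1 : φ < (1 / 2 : ℝ) ^ (1 / p)) (h2φ : (2 * φ) ^ p < 1)
    (hb : b = (1 - (2 * φ) ^ p) ^ (-(1 / p)))
    (i s : ℕ) (hi : 1 ≤ i) (his : i ≤ s) :
    φ ^ p * ∑ j ∈ Finset.Icc i s, ((⌈b ^ (s - j)⌉ : ℝ)) ^ p
      < b ^ (p * ((s : ℝ) - i)) := by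
  have hp' : p ≠ 0 := hp.ne'
  set A := (2 * φ) ^ p with hA
  have hA0 : 0 < A := Real.rpow_pos_of_pos (by linarith) p
  have h1A : 0 < 1 - A := by linarith
  have hb0 : 0 < b := hb ▸ Real.rpow_pos_of_pos h1A _
  have hb1 : 1 ≤ b := by
    rw [hb]
    exact Real.one_le_rpow_of_pos_of_le_one_of_nonpos h1A (by linarith)
      (neg_nonpos.mpr (by positivity))
  have ht : b ^ p = (1 - A)⁻¹ := by
    rw [hb, ← Real.rpow_mul h1A.le, show -(1/p) * p = -1 by field_simp,
      Real.rpow_neg_one]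
  set t := (1 - A)⁻¹ with htdef
  have ht0 : 0 < t := by positivity
  have ht1 : 1 < t := (one_lt_inv₀ h1A).2 (by linarith)
  have htA : t - 1 = A * t := by
    rw [htdef]
    field_simp
    ring
  -- pointwise bound
  have key : ∀ n : ℕ, ((⌈b ^ n⌉ : ℝ)) ^ p < 2 ^ p * t ^ n := by
    intro n
    have h1 : (1 : ℝ) ≤ b ^ n := one_le_pow₀ hb1
    have hc : ((⌈b ^ n⌉ : ℤ) : ℝ) < 2 * b ^ n := by
      have := Int.ceil_lt_add_one (b ^ n)
      linarith
    have hc0 : (0:ℝ) ≤ ((⌈b ^ n⌉ : ℤ) : ℝ) := by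
      exact_mod_cast Int.ceil_nonneg (by positivity : (0:ℝ) ≤ b ^ n)
    calc ((⌈b ^ n⌉ : ℤ) : ℝ) ^ p < (2 * b ^ n) ^ p :=
          Real.rpow_lt_rpow hc0 hc hp
      _ = 2 ^ p * (b ^ n) ^ p := Real.mul_rpow (by norm_num) (by positivity)
      _ = 2 ^ p * t ^ n := by
          rw [← Real.rpow_natCast b n, ← Real.rpow_mul hb0.le, mul_comm (n:ℝ) p,
            Real.rpow_mul hb0.le, Real.rpow_natCast, ht]
  obtain ⟨m, rfl⟩ : ∃ m, s = i + m := ⟨s - i, by omega⟩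
  have hRHS : b ^ (p * (((i + m : ℕ) : ℝ) - i)) = t ^ m := by
    rw [show (((i + m : ℕ) : ℝ) - i) = (m : ℝ) by push_cast; ring,
      Real.rpow_mul hb0.le, ht, Real.rpow_natCast]
  rw [hRHS]
  have hsum1 : ∑ j ∈ Finset.Icc i (i + m), ((⌈b ^ (i + m - j)⌉ : ℝ)) ^ p
      < ∑ j ∈ Finset.Icc i (i + m), 2 ^ p * t ^ (i + m - j) := by
    apply Finset.sum_lt_sum_of_nonempty (by simp)
    intro j hj
    exact key _
  have hsum2 : ∑ j ∈ Finset.Icc i (i + m), 2 ^ p * t ^ (i + m - j)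
      = 2 ^ p * ∑ k ∈ Finset.range (m + 1), t ^ k := by
    rw [← Finset.mul_sum]
    congr 1
    rw [← Finset.Ico_add_one_right_eq_Icc, Finset.sum_Ico_eq_sum_range]
    have h1 : i + m + 1 - i = m + 1 := by omega
    rw [h1]
    rw [← Finset.sum_range_reflect (fun k => t ^ k) (m + 1)]
    apply Finset.sum_congr rfl
    intro k hk
    simp only [Finset.mem_range] at hk
    congr 1
    omega
  have hgeom : ∑ k ∈ Finset.range (m + 1), t ^ k = (t ^ (m + 1) - 1) / (t - 1) :=
    geom_sum_eq ht1.ne' (m + 1)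
  have hφp : 0 < φ ^ p := Real.rpow_pos_of_pos hφ0 p
  have h2φp : φ ^ p * 2 ^ p = A := by
    rw [hA, Real.mul_rpow (by norm_num) hφ0.le]; ring
  calc φ ^ p * ∑ j ∈ Finset.Icc i (i + m), ((⌈b ^ (i + m - j)⌉ : ℝ)) ^ p
      < φ ^ p * (2 ^ p * ((t ^ (m + 1) - 1) / (t - 1))) := by
        rw [← hgeom, ← hsum2]
        exact (mul_lt_mul_iff_right₀ hφp).mpr hsum1
    _ = A * ((t ^ (m + 1) - 1) / (t - 1)) := by rw [← mul_assoc, h2φp]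
    _ < t ^ m := by
        rw [mul_div_assoc', div_lt_iff₀ (by linarith), htA]
        have : t ^ m * (A * t) = A * t ^ (m + 1) := by ring
        rw [this]
        have : t ^ (m + 1) - 1 < t ^ (m + 1) := by linarith
        nlinarith [pow_pos ht0 (m+1)]
end
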